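/- Jung's theorem: Let n be a natural number and let S be a subset of ℝⁿ of diameter at most 1, i.e. ‖x − y‖ ≤ 1 for all x, y ∈ S. Then there exists a point c ∈ ℝⁿ such that S is contained in the closed ball of radius √(n / (2(n + 1))) centered at c. -/

import Mathlib

open Finset Metric
open scoped RealInnerProductSpace

variable {n : ℕ}

set_option maxHeartbeats 1000000 in
/-- The key finite case: at most `n+1` points of diameter ≤ 1 in `ℝⁿ` fit in a ball of
radius `√(n / (2(n+1)))`. -/
lemma jung_finset (n : ℕ) (T : Finset (EuclideanSpace ℝ (Fin n))) (hT : T.Nonempty)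
    (hcard : T.card ≤ n + 1)
    (hd : ∀ x ∈ T, ∀ y ∈ T, ‖x - y‖ ≤ 1) :
    ∃ c : EuclideanSpace ℝ (Fin n), ∀ x ∈ T, dist c x ≤ Real.sqrt (n / (2 * (n + 1))) := by
  classical
  -- the radius function
  set f : EuclideanSpace ℝ (Fin n) → ℝ := fun c => T.sup' hT (fun x => dist c x) with hf
  have hf_cont : Continuous f := by
    apply Continuous.finset_sup'_apply hT
    intro i _
    exact continuous_id.dist continuous_const
  obtain ⟨x₀, hx₀⟩ := id hT
  have hfx₀ : f x₀ ≤ 1 := by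
    apply Finset.sup'_le
    intro x hx
    rw [dist_eq_norm]
    exact hd x₀ hx₀ x hx
  -- minimize f over a compact ball; the min is global
  obtain ⟨c, hcball, hcmin⟩ : ∃ c ∈ closedBall x₀ 1, ∀ c' ∈ closedBall x₀ 1, f c ≤ f c' := by
    obtain ⟨c, hc, hmin⟩ := (isCompact_closedBall x₀ 1).exists_isMinOn
      ⟨x₀, mem_closedBall_self zero_le_one⟩ hf_cont.continuousOn
    exact ⟨c, hc, fun c' hc' => hmin hc'⟩
  have hglobal : ∀ c' : EuclideanSpace ℝ (Fin n), f c ≤ f c' := by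
    intro c'
    by_cases h : c' ∈ closedBall x₀ 1
    · exact hcmin c' h
    · have h1 : f c ≤ f x₀ := hcmin x₀ (mem_closedBall_self zero_le_one)
      have h2 : 1 < dist c' x₀ := by
        simpa [mem_closedBall] using h
      have h3 : dist c' x₀ ≤ f c' := Finset.le_sup' _ hx₀
      linarith
  set R := f c with hR
  have hR0 : 0 ≤ R := le_trans dist_nonneg (Finset.le_sup' (fun x => dist c x) hx₀)
  have hRx : ∀ x ∈ T, dist c x ≤ R := fun x hx => Finset.le_sup' _ hx
  -- contact set
  set K : Finset (EuclideanSpace ℝ (Fin n)) := T.filter (fun x => dist c x = R) with hK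
  have hKne : K.Nonempty := by
    obtain ⟨x, hx, hxe⟩ := Finset.exists_mem_eq_sup' hT (fun x => dist c x)
    exact ⟨x, Finset.mem_filter.2 ⟨hx, hxe.symm⟩⟩
  have hKsub : K ⊆ T := Finset.filter_subset _ _
  -- the center is in the convex hull of the contact set
  have hchull : c ∈ convexHull ℝ (K : Set (EuclideanSpace ℝ (Fin n))) := by
    by_contra hc
    obtain ⟨φ, u, hφc, hφK⟩ := geometric_hahn_banach_point_closed
      (convex_convexHull ℝ _) ((K : Set (EuclideanSpace ℝ (Fin n))).toFinite.isCompact_convexHull (𝕜 := ℝ)).isClosed hc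
    set v := (InnerProductSpace.toDual ℝ (EuclideanSpace ℝ (Fin n))).symm φ with hv
    have hφ : ∀ y, φ y = ⟪v, y⟫ := by
      intro y
      rw [hv]
      exact (InnerProductSpace.toDual_symm_apply).symm
    have hδ : ∀ x ∈ K, 0 < ⟪v, x - c⟫ := by
      intro x hx
      have h1 : u < φ x := hφK x (subset_convexHull ℝ _ hx)
      rw [inner_sub_right, ← hφ x, ← hφ c]
      linarith
    set δ : ℝ := K.inf' hKne (fun x => ⟪v, x - c⟫) with hδ'
    have hδpos : 0 < δ := by
      obtain ⟨x, hx, hxe⟩ := Finset.exists_mem_eq_inf' hKne (fun x => ⟪v, x - c⟫)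
      rw [hδ', hxe]; exact hδ x hx
    have hvne : v ≠ 0 := by
      obtain ⟨x, hx⟩ := hKne
      intro h
      have := hδ x hx
      rw [h, inner_zero_left] at this
      exact lt_irrefl _ this
    have hvnorm : 0 < ‖v‖ := norm_pos_iff.2 hvne
    have hv2 : 0 < ‖v‖ ^ 2 := by positivity
    -- choose a step size
    -- for non-contact points
    set R' : ℝ := if h : (T \ K).Nonempty then (T \ K).sup' h (fun x => dist c x) else 0 with hR'
    have hR'lt : R' < R := by
      rw [hR']
      split_ifs with h
      · apply (Finset.sup'_lt_iff h).2
        intro x hx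
        rcases Finset.mem_sdiff.1 hx with ⟨hxT, hxK⟩
        rcases lt_or_eq_of_le (hRx x hxT) with h' | h'
        · exact h'
        · exact absurd (Finset.mem_filter.2 ⟨hxT, h'⟩) hxK
      · -- R' = 0 < R ; need R > 0: since 0 < δ ≤ ⟪v,x-c⟫ ≤ ‖v‖·‖x-c‖ = ‖v‖ R for contact x
        obtain ⟨x, hx⟩ := hKne
        have h1 := hδ x hx
        have h2 : ⟪v, x - c⟫ ≤ ‖v‖ * ‖x - c‖ := real_inner_le_norm _ _
        have h3 : ‖x - c‖ = R := by
          rw [← dist_eq_norm, dist_comm]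
          exact (Finset.mem_filter.1 hx).2
        nlinarith [norm_nonneg v]
    set t : ℝ := min (δ / ‖v‖ ^ 2) ((R - R') / (2 * ‖v‖)) with ht'
    have htpos : 0 < t := lt_min (div_pos hδpos hv2) (div_pos (by linarith) (by positivity))
    set c' := c + t • v with hc'
    have hcontact : ∀ x ∈ K, dist c' x < R := by
      intro x hx
      have hxR : ‖x - c‖ = R := by
        rw [← dist_eq_norm, dist_comm]; exact (Finset.mem_filter.1 hx).2
      have hid : ‖x - c'‖ ^ 2 = ‖x - c‖ ^ 2 - 2 * t * ⟪v, x - c⟫ + t ^ 2 * ‖v‖ ^ 2 := by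
        have : x - c' = (x - c) - t • v := by rw [hc']; abel
        rw [this, norm_sub_sq_real, norm_smul, real_inner_smul_right,
          real_inner_comm]
        simp [mul_pow, abs_of_pos htpos]
        ring
      have h1 : δ ≤ ⟪v, x - c⟫ := Finset.inf'_le _ hx
      have h2 : t ≤ δ / ‖v‖ ^ 2 := min_le_left _ _
      have h3 : t ^ 2 * ‖v‖ ^ 2 ≤ t * δ := by
        have h2' : t * ‖v‖ ^ 2 ≤ δ := (le_div_iff₀ hv2).1 h2
        nlinarith [htpos.le]
      have h4 : ‖x - c'‖ ^ 2 ≤ R ^ 2 - t * δ := by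
        rw [hid, hxR]
        nlinarith
      have h5 : ‖x - c'‖ ^ 2 < R ^ 2 := by nlinarith
      rw [dist_comm, dist_eq_norm]
      by_contra hcon
      push_neg at hcon
      have : R ^ 2 ≤ ‖x - c'‖ ^ 2 := pow_le_pow_left₀ hR0 hcon 2
      linarith
    have hnoncontact : ∀ x ∈ T \ K, dist c' x < R := by
      intro x hx
      have h1 : dist c x ≤ R' := by
        rw [hR']
        rw [dif_pos ⟨x, hx⟩]
        exact Finset.le_sup' _ hx
      have h2 : dist c' c = t * ‖v‖ := by
        rw [hc', dist_eq_norm]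
        simp [norm_smul, abs_of_pos htpos]
      have h3 : t * ‖v‖ ≤ (R - R') / 2 := by
        have : t ≤ (R - R') / (2 * ‖v‖) := min_le_right _ _
        rw [le_div_iff₀ (by positivity)] at this
        linarith
      calc dist c' x ≤ dist c' c + dist c x := dist_triangle _ _ _
        _ ≤ (R - R') / 2 + R' := by rw [h2]; linarith
        _ < R := by linarith
    have : f c' < R := by
      apply (Finset.sup'_lt_iff hT).2
      intro x hx
      by_cases h : x ∈ K
      · exact hcontact x h
      · exact hnoncontact x (Finset.mem_sdiff.2 ⟨hx, h⟩)
    exact absurd (hglobal c') (by linarith)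
  -- extract convex combination weights
  rw [Finset.convexHull_eq] at hchull
  obtain ⟨w, hw0, hw1, hwc⟩ := hchull
  rw [Finset.centerMass_eq_of_sum_1 _ _ hw1] at hwc
  -- Σ w x • (x - c) = 0
  have hsum0 : ∑ x ∈ K, w x • (x - c) = (0 : EuclideanSpace ℝ (Fin n)) := by
    have : ∑ x ∈ K, w x • (x - c) = (∑ x ∈ K, w x • (id x : EuclideanSpace ℝ (Fin n))) - (∑ x ∈ K, w x) • c := by
      rw [Finset.sum_smul, ← Finset.sum_sub_distrib]
      congr 1
      ext x
      rw [smul_sub]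
      rfl
    rw [this, hwc, hw1, one_smul, sub_self]
  -- key identity
  have hkey : ∑ x ∈ K, ∑ y ∈ K, w x * w y * ‖x - y‖ ^ 2 = 2 * R ^ 2 := by
    have expand : ∀ x ∈ K, ∀ y ∈ K, ‖x - y‖ ^ 2 =
        ‖x - c‖ ^ 2 + ‖y - c‖ ^ 2 - 2 * ⟪x - c, y - c⟫ := by
      intro x _ y _
      have : x - y = (x - c) - (y - c) := by abel
      rw [this, norm_sub_sq_real]
      ring
    have hRx' : ∀ x ∈ K, ‖x - c‖ ^ 2 = R ^ 2 := by
      intro x hx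
      rw [← dist_eq_norm, dist_comm, (Finset.mem_filter.1 hx).2]
    calc ∑ x ∈ K, ∑ y ∈ K, w x * w y * ‖x - y‖ ^ 2
        = ∑ x ∈ K, ∑ y ∈ K, (w x * w y * ‖x - c‖ ^ 2 + w x * w y * ‖y - c‖ ^ 2
            - 2 * (w x * w y * ⟪x - c, y - c⟫)) := by
          apply Finset.sum_congr rfl; intro x hx
          apply Finset.sum_congr rfl; intro y hy
          rw [expand x hx y hy]; ring
      _ = 2 * R ^ 2 := by
          have e1 : ∑ x ∈ K, ∑ y ∈ K, w x * w y * ‖x - c‖ ^ 2 = R ^ 2 := by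
            rw [Finset.sum_comm]
            calc ∑ y ∈ K, ∑ x ∈ K, w x * w y * ‖x - c‖ ^ 2
                = ∑ y ∈ K, w y * ∑ x ∈ K, w x * ‖x - c‖ ^ 2 := by
                  apply Finset.sum_congr rfl; intro y _
                  rw [Finset.mul_sum]; apply Finset.sum_congr rfl; intro x _; ring
              _ = R ^ 2 := by
                  rw [← Finset.sum_mul]
                  rw [show ∑ x ∈ K, w x * ‖x - c‖ ^ 2 = ∑ x ∈ K, w x * R ^ 2 from
                    Finset.sum_congr rfl fun x hx => by rw [hRx' x hx]]
                  rw [← Finset.sum_mul, hw1]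
                  ring
          have e2 : ∑ x ∈ K, ∑ y ∈ K, w x * w y * ‖y - c‖ ^ 2 = R ^ 2 := by
            calc ∑ x ∈ K, ∑ y ∈ K, w x * w y * ‖y - c‖ ^ 2
                = ∑ x ∈ K, w x * ∑ y ∈ K, w y * ‖y - c‖ ^ 2 := by
                  apply Finset.sum_congr rfl; intro x _
                  rw [Finset.mul_sum]; apply Finset.sum_congr rfl; intro y _; ring
              _ = R ^ 2 := by
                  rw [← Finset.sum_mul]
                  rw [show ∑ y ∈ K, w y * ‖y - c‖ ^ 2 = ∑ y ∈ K, w y * R ^ 2 from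
                    Finset.sum_congr rfl fun y hy => by rw [hRx' y hy]]
                  rw [← Finset.sum_mul, hw1]
                  ring
          have e3 : ∑ x ∈ K, ∑ y ∈ K, w x * w y * ⟪x - c, y - c⟫ = 0 := by
            calc ∑ x ∈ K, ∑ y ∈ K, w x * w y * ⟪x - c, y - c⟫
                = ⟪∑ x ∈ K, w x • (x - c), ∑ y ∈ K, w y • (y - c)⟫ := by
                  rw [sum_inner]
                  apply Finset.sum_congr rfl; intro x _
                  rw [inner_sum]
                  apply Finset.sum_congr rfl; intro y _
                  rw [real_inner_smul_left, real_inner_smul_right]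
                  ring
              _ = 0 := by rw [hsum0, inner_zero_left]
          have esum : ∑ x ∈ K, ∑ y ∈ K, (w x * w y * ‖x - c‖ ^ 2 + w x * w y * ‖y - c‖ ^ 2
              - 2 * (w x * w y * ⟪x - c, y - c⟫)) =
              (∑ x ∈ K, ∑ y ∈ K, w x * w y * ‖x - c‖ ^ 2)
              + (∑ x ∈ K, ∑ y ∈ K, w x * w y * ‖y - c‖ ^ 2)
              - 2 * (∑ x ∈ K, ∑ y ∈ K, w x * w y * ⟪x - c, y - c⟫) := by
            simp only [Finset.sum_add_distrib, Finset.sum_sub_distrib, ← Finset.mul_sum]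
          rw [esum, e1, e2, e3]
          ring
  -- bound the double sum from above
  have step : ∀ x ∈ K, ∑ y ∈ K, w x * w y * ‖x - y‖ ^ 2 ≤ (∑ y ∈ K, w x * w y) - w x * w x := by
    intro x hx
    have h0 : ∑ y ∈ K, w x * w y * ‖x - y‖ ^ 2 = ∑ y ∈ K.erase x, w x * w y * ‖x - y‖ ^ 2 := by
      rw [← Finset.add_sum_erase K _ hx]
      simp
    have h1 : ∑ y ∈ K.erase x, w x * w y * ‖x - y‖ ^ 2 ≤ ∑ y ∈ K.erase x, w x * w y := by
      apply Finset.sum_le_sum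
      intro y hy
      have hnn : 0 ≤ w x * w y := mul_nonneg (hw0 x hx) (hw0 y (Finset.mem_of_mem_erase hy))
      have hxy : ‖x - y‖ ≤ 1 := hd x (hKsub hx) y (hKsub (Finset.mem_of_mem_erase hy))
      have hsq : ‖x - y‖ ^ 2 ≤ 1 := by nlinarith [norm_nonneg (x - y)]
      calc w x * w y * ‖x - y‖ ^ 2 ≤ w x * w y * 1 := mul_le_mul_of_nonneg_left hsq hnn
        _ = w x * w y := mul_one _
    have h2 : ∑ y ∈ K.erase x, w x * w y = (∑ y ∈ K, w x * w y) - w x * w x := by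
      rw [← Finset.add_sum_erase K (fun y => w x * w y) hx]
      ring
    rw [h0, ← h2]
    exact h1
  have htot : ∑ x ∈ K, ∑ y ∈ K, w x * w y * ‖x - y‖ ^ 2 ≤ 1 - ∑ x ∈ K, w x * w x := by
    calc ∑ x ∈ K, ∑ y ∈ K, w x * w y * ‖x - y‖ ^ 2
        ≤ ∑ x ∈ K, ((∑ y ∈ K, w x * w y) - w x * w x) := Finset.sum_le_sum step
      _ = 1 - ∑ x ∈ K, w x * w x := by
          rw [Finset.sum_sub_distrib]
          congr 1
          calc ∑ x ∈ K, ∑ y ∈ K, w x * w y = ∑ x ∈ K, w x * ∑ y ∈ K, w y := by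
                apply Finset.sum_congr rfl; intro x _; rw [Finset.mul_sum]
            _ = 1 := by rw [hw1]; simpa using hw1
  -- Cauchy-Schwarz lower bound on the sum of squares
  have hKcard : (K.card : ℝ) ≤ (n : ℝ) + 1 := by
    have := le_trans (Finset.card_le_card hKsub) hcard
    exact_mod_cast this
  have hcs : (1 : ℝ) ≤ (K.card : ℝ) * ∑ x ∈ K, w x * w x := by
    have h := sq_sum_le_card_mul_sum_sq (s := K) (f := w)
    have h' : (∑ x ∈ K, w x) ^ 2 = 1 := by rw [hw1]; norm_num
    calc (1 : ℝ) = (∑ x ∈ K, w x) ^ 2 := h'.symm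
      _ ≤ (K.card : ℝ) * ∑ x ∈ K, w x ^ 2 := h
      _ = (K.card : ℝ) * ∑ x ∈ K, w x * w x := by
          congr 1
          exact Finset.sum_congr rfl fun x _ => sq (w x) ▸ by ring
  have hssq : 0 ≤ ∑ x ∈ K, w x * w x :=
    Finset.sum_nonneg fun x hx => mul_self_nonneg (w x)
  have hn1 : (0 : ℝ) < (n : ℝ) + 1 := by positivity
  have hKcard0 : (0 : ℝ) < (K.card : ℝ) := by
    exact_mod_cast Finset.card_pos.2 hKne
  -- conclude R² ≤ n / (2(n+1))
  have hR2 : R ^ 2 ≤ (n : ℝ) / (2 * ((n : ℝ) + 1)) := by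
    have h1 : (1 : ℝ) ≤ ((n : ℝ) + 1) * ∑ x ∈ K, w x * w x := by
      calc (1 : ℝ) ≤ (K.card : ℝ) * ∑ x ∈ K, w x * w x := hcs
        _ ≤ ((n : ℝ) + 1) * ∑ x ∈ K, w x * w x :=
            mul_le_mul_of_nonneg_right hKcard hssq
    have h2 : 2 * R ^ 2 ≤ 1 - ∑ x ∈ K, w x * w x := by
      rw [← hkey]
      exact htot
    rw [le_div_iff₀ (by positivity : (0 : ℝ) < 2 * ((n : ℝ) + 1))]
    nlinarith [mul_le_mul_of_nonneg_left h2 hn1.le, h1]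
  refine ⟨c, fun x hx => ?_⟩
  calc dist c x ≤ R := hRx x hx
    _ ≤ Real.sqrt ((n : ℝ) / (2 * ((n : ℝ) + 1))) := Real.le_sqrt_of_sq_le hR2

/-- Jung's theorem: every subset of `ℝⁿ` of diameter at most `1` is contained in a
closed ball of radius `√(n / (2(n + 1)))`. -/
theorem jung (n : ℕ) (S : Set (EuclideanSpace ℝ (Fin n)))
    (hS : ∀ x ∈ S, ∀ y ∈ S, ‖x - y‖ ≤ 1) :
    ∃ c : EuclideanSpace ℝ (Fin n),
      S ⊆ Metric.closedBall c (Real.sqrt (n / (2 * (n + 1)))) := by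
  classical
  set r := Real.sqrt (n / (2 * (n + 1))) with hr
  have hinter : (⋂ x : S, closedBall (x : EuclideanSpace ℝ (Fin n)) r).Nonempty := by
    apply Convex.helly_theorem_compact' (𝕜 := ℝ)
      (fun x => convex_closedBall _ _) (fun x => isCompact_closedBall _ _)
    intro I hI
    rcases Finset.eq_empty_or_nonempty I with rfl | hIne
    · simp
    · have hTne : (I.image Subtype.val).Nonempty := hIne.image _
      have hTcard : (I.image Subtype.val).card ≤ n + 1 := by
        have h1 := Finset.card_image_le (s := I) (f := Subtype.val)
        have hrank : Module.finrank ℝ (EuclideanSpace ℝ (Fin n)) = n := by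
          simp [finrank_euclideanSpace]
        rw [hrank] at hI
        omega
      obtain ⟨c, hc⟩ := jung_finset n (I.image Subtype.val) hTne hTcard (by
        intro x hx y hy
        rw [Finset.mem_image] at hx hy
        obtain ⟨a, _, rfl⟩ := hx
        obtain ⟨b, _, rfl⟩ := hy
        exact hS a a.2 b b.2)
      refine ⟨c, ?_⟩
      rw [Set.mem_iInter₂]
      intro i hi
      rw [mem_closedBall]
      exact hc i (Finset.mem_image_of_mem _ hi)
  obtain ⟨c, hc⟩ := hinter
  refine ⟨c, fun x hx => ?_⟩
  have := Set.mem_iInter.1 hc ⟨x, hx⟩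
  rw [mem_closedBall] at this ⊢
  rwa [dist_comm]
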